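/- Every f-MEM of P with respect to T of length at least k is contained in some KeBaB pseudo-MEM of P. (In particular, with f = 1 and g exactly the set of k-mers of T, the maximal substrings of P consisting only of k-mers of T contain all MEMs of P with respect to T of length at least k.) -/

import Mathlib

/-- The substring of `S` at 0-indexed closed positions `[i..j]`. -/
def strSub {α : Type*} (S : List α) (i j : ℕ) : List α := (S.drop i).take (j + 1 - i)

/-- The number of occurrences of `S` as a contiguous substring of `X`. -/
def occCount {α : Type*} [DecidableEq α] (S X : List α) : ℕ :=
  ((Finset.range (X.length + 1)).filter
    (fun p => p + S.length ≤ X.length ∧ (X.drop p).take S.length = S)).card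

lemma occ_mono {α : Type*} [DecidableEq α] (S X : List α) (d L : ℕ)
    (hdL : d + L ≤ S.length) :
    occCount S X ≤ occCount ((S.drop d).take L) X := by
  have hlen : ((S.drop d).take L).length = L := by
    simp [List.length_take, List.length_drop]; omega
  unfold occCount
  apply Finset.card_le_card_of_injOn (fun p => p + d)
  · intro p hp
    simp only [Finset.mem_coe, Finset.mem_filter, Finset.mem_range] at hp ⊢
    obtain ⟨hp1, hp2, hp3⟩ := hp
    rw [hlen]
    refine ⟨by omega, by omega, ?_⟩
    have : (S.drop d).take L = (((X.drop p).take S.length).drop d).take L := by rw [hp3]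
    rw [this, List.drop_take, List.take_take, List.drop_drop]
    congr 1
    omega
  · intro x _ y _ h
    simpa using h

/-- `P[i..j]` (0-indexed, closed) is an `f`-MEM of `P` with respect to `T`. -/
def IsMEM {α : Type*} [DecidableEq α] (f : ℕ) (P T : List α) (i j : ℕ) : Prop :=
  i ≤ j ∧ j < P.length ∧ f ≤ occCount (strSub P i j) T ∧
  (i = 0 ∨ occCount (strSub P (i - 1) j) T < f) ∧
  (j + 1 = P.length ∨ occCount (strSub P i (j + 1)) T < f)

/-- The predicate `g` holds for every `k`-mer of the substring `P[a..b]`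
(0-indexed, closed). -/
def kmersGood {α : Type*} (g : List α → Prop) (k : ℕ) (P : List α) (a b : ℕ) : Prop :=
  ∀ p, a ≤ p → p + k ≤ b + 1 → g ((P.drop p).take k)

/-- `P[a..b]` (0-indexed, closed) is a KeBaB pseudo-MEM of `P`: a maximal substring of
length at least `k` all of whose `k`-mers satisfy `g`. -/
def IsKebabPM {α : Type*} (g : List α → Prop) (k : ℕ) (P : List α) (a b : ℕ) : Prop :=
  b < P.length ∧ a + k ≤ b + 1 ∧ kmersGood g k P a b ∧
  (a = 0 ∨ ¬ kmersGood g k P (a - 1) b) ∧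
  (b + 1 = P.length ∨ ¬ kmersGood g k P a (b + 1))

/-- Let `g` be any predicate on `k`-mers holding for every `k`-mer
occurring at least `f` times in `T` (modelling a Bloom filter with false positives).
Then every `f`-MEM of `P` with respect to `T` of length at least `k` is contained in
some KeBaB pseudo-MEM of `P`. -/
theorem kebab_pseudoMEMs_contain_long_MEMs {α : Type*} [DecidableEq α] (k f : ℕ)
    (hk : 1 ≤ k) (hf : 1 ≤ f) (g : List α → Prop) (P T : List α)
    (hg : ∀ x : List α, x.length = k → f ≤ occCount x T → g x)
    (i j : ℕ) (hmem : IsMEM f P T i j) (hlen : k ≤ j + 1 - i) :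
    ∃ a b, IsKebabPM g k P a b ∧ a ≤ i ∧ j ≤ b := by
  classical
  obtain ⟨hij, hjP, hocc, _, _⟩ := hmem
  -- every k-mer of P[i..j] is good
  have hgood : kmersGood g k P i j := by
    intro p hip hpk
    have hsub : (P.drop p).take k = ((strSub P i j).drop (p - i)).take k := by
      unfold strSub
      rw [List.drop_take, List.drop_drop, List.take_take]
      congr 1
      · omega
      · congr 1; omega
    have hdL : (p - i) + k ≤ (strSub P i j).length := by
      unfold strSub
      simp [List.length_take, List.length_drop]
      omega
    have hle := occ_mono (strSub P i j) T (p - i) k hdL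
    rw [← hsub] at hle
    apply hg
    · simp [List.length_take, List.length_drop]; omega
    · omega
  -- minimal left endpoint
  have hexA : ∃ a, kmersGood g k P a j := ⟨i, hgood⟩
  set a := Nat.find hexA with ha
  have hai : a ≤ i := Nat.find_min' hexA hgood
  have haj : kmersGood g k P a j := Nat.find_spec hexA
  -- maximal right endpoint
  set Q : ℕ → Prop := fun b => b < P.length ∧ kmersGood g k P a b with hQ
  have hQj : Q j := ⟨hjP, haj⟩
  set b := Nat.findGreatest Q P.length with hb
  have hjb : j ≤ b := Nat.le_findGreatest (by omega) hQj
  have hQb : Q b := Nat.findGreatest_spec (by omega) hQj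
  refine ⟨a, b, ⟨hQb.1, by omega, hQb.2, ?_, ?_⟩, hai, hjb⟩
  · rcases Nat.eq_zero_or_pos a with h0 | h0
    · exact Or.inl h0
    · refine Or.inr fun hbad => ?_
      have : kmersGood g k P (a - 1) j := by
        intro p hp hpk
        exact hbad p hp (by omega)
      exact Nat.find_min hexA (by omega) this
  · rcases Nat.lt_or_ge (b + 1) P.length with h1 | h1
    · refine Or.inr fun hbad => ?_
      have : ¬ Q (b + 1) := Nat.findGreatest_is_greatest (P := Q) (n := P.length) (by omega) (by omega)
      exact this ⟨h1, hbad⟩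
    · exact Or.inl (le_antisymm hQb.1 h1)
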